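/- If a measure space (X, M, μ) and a measurable function f satisfy ‖f‖_{B_{p,q₀}} < ∞ for some p ≥ 1 and q₀ > 0, where B_{p,q}(t) = t^p·log(e-1+t)^q is the Young function defining the Luxemburg norm, then lim_{q→∞} ‖f‖_{B_{p,q}} = ‖f‖_∞. -/

import Mathlib

open MeasureTheory Filter Real Topology ENNReal

noncomputable def e0 : ℝ := Real.exp 1 - 1

noncomputable def Bpq (p q t : ℝ) : ℝ := t ^ p * (Real.log (e0 + t)) ^ q

noncomputable def BpqBar (p q t : ℝ) : ℝ := t ^ p * (Real.log (Real.exp 1 + t)) ^ q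

/-- The Luxemburg norm of `f` with respect to the Young function `A`. -/
noncomputable def luxNorm {X : Type*} [MeasurableSpace X] (μ : Measure X)
    (A : ℝ → ℝ) (f : X → ℝ) : ℝ≥0∞ :=
  sInf {lam : ℝ≥0∞ | 0 < lam ∧ lam ≠ ∞ ∧
    ∫⁻ x, ENNReal.ofReal (A (|f x| / lam.toReal)) ∂μ ≤ 1}

/-- `A` is a Young function: continuous, convex, increasing on `[0,∞)`,
`A 0 = 0` and `A t / t → ∞`. -/
def IsYoung (A : ℝ → ℝ) : Prop :=
  ContinuousOn A (Set.Ici 0) ∧ ConvexOn ℝ (Set.Ici 0) A ∧ MonotoneOn A (Set.Ici 0) ∧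
    A 0 = 0 ∧ Tendsto (fun t => A t / t) atTop atTop

lemma e0_gt_one : 1 < e0 := by
  have := Real.exp_one_gt_d9; unfold e0; linarith

lemma log_e0_pos : 0 < Real.log e0 := Real.log_pos e0_gt_one

lemma log_e0t_nonneg {t : ℝ} (ht : 0 ≤ t) : 0 ≤ Real.log (e0 + t) :=
  Real.log_nonneg (by linarith [e0_gt_one])

lemma bpq_mono {p q t₁ t₂ : ℝ} (hp : 0 ≤ p) (hq : 0 ≤ q) (h0 : 0 ≤ t₁) (h : t₁ ≤ t₂) :
    Bpq p q t₁ ≤ Bpq p q t₂ := by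
  unfold Bpq
  have h2 : (0:ℝ) < e0 + t₁ := by linarith [e0_gt_one]
  refine mul_le_mul (Real.rpow_le_rpow h0 h hp)
    (Real.rpow_le_rpow (log_e0t_nonneg h0) (Real.log_le_log h2 (by linarith)) hq)
    (Real.rpow_nonneg (log_e0t_nonneg h0) q) (Real.rpow_nonneg (le_trans h0 h) p)

lemma log_e0t_gt_one {t : ℝ} (ht : 1 < t) : 1 < Real.log (e0 + t) := by
  have h1 : Real.exp 1 < e0 + t := by unfold e0; linarith
  calc (1:ℝ) = Real.log (Real.exp 1) := (Real.log_exp 1).symm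
    _ < Real.log (e0 + t) := Real.log_lt_log (Real.exp_pos 1) h1

lemma log_e0t_lt_one {t : ℝ} (ht0 : 0 ≤ t) (ht : t < 1) : Real.log (e0 + t) < 1 := by
  have h1 : e0 + t < Real.exp 1 := by unfold e0; linarith
  calc Real.log (e0 + t) < Real.log (Real.exp 1) :=
        Real.log_lt_log (by linarith [e0_gt_one]) h1
    _ = 1 := Real.log_exp 1

lemma meas_B {X : Type*} [MeasurableSpace X] {f : X → ℝ} (hf : Measurable f) (p q c : ℝ) :
    Measurable fun x => ENNReal.ofReal (Bpq p q (|f x| / c)) := by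
  unfold Bpq
  have h1 : Measurable fun x => |f x| / c := hf.abs.div_const c
  have h2 : Measurable fun x => Real.log (e0 + |f x| / c) :=
    Real.measurable_log.comp (measurable_const.add h1)
  exact ((h1.pow_const p).mul (h2.pow_const q)).ennreal_ofReal

lemma lower_aux {X : Type*} [MeasurableSpace X] (μ : Measure X) (f : X → ℝ)
    (hf : Measurable f) (p : ℝ) (hp : 1 ≤ p) {β γ : ℝ≥0∞} (hβ0 : 0 < β) (hβγ : β < γ)
    (hγtop : γ ≠ ⊤) (hγM : γ < eLpNormEssSup f μ) :
    ∀ᶠ q in atTop, ∀ lam ∈ {lam : ℝ≥0∞ | 0 < lam ∧ lam ≠ ∞ ∧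
      ∫⁻ x, ENNReal.ofReal (Bpq p q (|f x| / lam.toReal)) ∂μ ≤ 1}, β ≤ lam := by
  have hβtop : β ≠ ⊤ := (hβγ.trans (lt_top_iff_ne_top.2 hγtop)).ne
  set bR := β.toReal with hbRdef
  set m := γ.toReal with hmdef
  have hbR : 0 < bR := ENNReal.toReal_pos hβ0.ne' hβtop
  have hbm : bR < m := (ENNReal.toReal_lt_toReal hβtop hγtop).2 hβγ
  set ρ := m / bR with hρdef
  have hρ : 1 < ρ := (one_lt_div hbR).2 hbm
  set K := μ {x | γ < (‖f x‖₊ : ℝ≥0∞)} with hKdef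
  have hK : 0 < K := by
    rcases eq_or_ne K 0 with h | h
    · exfalso
      have hae : ∀ᵐ x ∂μ, (‖f x‖₊ : ℝ≥0∞) ≤ γ := by
        rw [ae_iff]
        convert h using 2
        ext x; simp [not_le]
      have : eLpNormEssSup f μ ≤ γ := by
        rw [eLpNormEssSup]
        exact essSup_le_of_ae_le γ hae
      exact absurd hγM (not_lt.2 this)
    · exact pos_iff_ne_zero.2 h
  set ℓ := Real.log (e0 + ρ) with hℓdef
  have hℓ : 1 < ℓ := log_e0t_gt_one hρ
  have T1 : Tendsto (fun q : ℝ => ℓ ^ q) atTop atTop := by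
    simp_rw [Real.rpow_def_of_pos (by linarith : (0:ℝ) < ℓ)]
    exact Real.tendsto_exp_atTop.comp (Tendsto.const_mul_atTop (Real.log_pos hℓ) tendsto_id)
  have T2 : Tendsto (fun q : ℝ => ENNReal.ofReal (ℓ ^ q)) atTop (𝓝 ⊤) :=
    tendsto_ofReal_atTop.comp T1
  set C := ENNReal.ofReal (ρ ^ p) * K with hCdef
  have hC0 : C ≠ 0 := by
    refine mul_ne_zero ?_ hK.ne'
    exact (ENNReal.ofReal_pos.2 (Real.rpow_pos_of_pos (by linarith) p)).ne'
  have T3 : Tendsto (fun q : ℝ => ENNReal.ofReal (Bpq p q ρ) * K) atTop (𝓝 ⊤) := by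
    have h4 := ENNReal.Tendsto.mul_const T2 (Or.inl (by simp : (⊤:ℝ≥0∞) ≠ 0)) (b := C)
    rw [ENNReal.top_mul hC0] at h4
    refine h4.congr fun q => ?_
    rw [Bpq, ENNReal.ofReal_mul (Real.rpow_nonneg (by linarith) p)]
    ring
  have hev := T3.eventually (lt_mem_nhds (by simp : (1:ℝ≥0∞) < ⊤))
  filter_upwards [hev, eventually_ge_atTop (0:ℝ)] with q hq1 hq0
  rintro lam ⟨hl0, hltop, hint⟩
  by_contra hcon
  push_neg at hcon
  set lamR := lam.toReal with hlamRdef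
  have hlamR : 0 < lamR := ENNReal.toReal_pos hl0.ne' hltop
  have hlamRb : lamR < bR := (ENNReal.toReal_lt_toReal hltop hβtop).2 hcon
  have hsub : {x | γ < (‖f x‖₊ : ℝ≥0∞)} ⊆
      {x | ENNReal.ofReal (Bpq p q ρ) ≤ ENNReal.ofReal (Bpq p q (|f x| / lamR))} := by
    intro x hx
    have habs : m < |f x| := by
      have h1 : (‖f x‖₊ : ℝ≥0∞) = ENNReal.ofReal |f x| := Real.enorm_eq_ofReal_abs _
      have h2 : ENNReal.ofReal m < ENNReal.ofReal |f x| := by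
        rw [← h1, hmdef, ENNReal.ofReal_toReal hγtop]; exact hx
      exact (ENNReal.ofReal_lt_ofReal_iff_of_nonneg ENNReal.toReal_nonneg).1 h2
    have hρle : ρ ≤ |f x| / lamR :=
      div_le_div₀ (abs_nonneg _) habs.le hlamR hlamRb.le
    exact ENNReal.ofReal_le_ofReal (bpq_mono (by linarith) hq0 (by positivity) hρle)
  have key : ENNReal.ofReal (Bpq p q ρ) * K ≤
      ∫⁻ x, ENNReal.ofReal (Bpq p q (|f x| / lamR)) ∂μ := by
    calc ENNReal.ofReal (Bpq p q ρ) * K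
        ≤ ENNReal.ofReal (Bpq p q ρ) *
          μ {x | ENNReal.ofReal (Bpq p q ρ) ≤ ENNReal.ofReal (Bpq p q (|f x| / lamR))} :=
          mul_le_mul_right (measure_mono hsub) _
      _ ≤ _ := mul_meas_ge_le_lintegral₀ (meas_B hf p q lamR).aemeasurable _
  exact absurd ((hq1.trans_le key).trans_le hint) (by simp)

lemma upper_aux {X : Type*} [MeasurableSpace X] (μ : Measure X) (f : X → ℝ)
    (p q₀ : ℝ) (hp : 1 ≤ p) (hq₀ : 0 < q₀)
    {lam₀ : ℝ≥0∞} (h00 : 0 < lam₀) (h0top : lam₀ ≠ ⊤)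
    (hint0 : ∫⁻ x, ENNReal.ofReal (Bpq p q₀ (|f x| / lam₀.toReal)) ∂μ ≤ 1)
    {lam : ℝ≥0∞} (hMlam : eLpNormEssSup f μ < lam) (hlamtop : lam ≠ ⊤) :
    ∀ᶠ q in atTop, ∫⁻ x, ENNReal.ofReal (Bpq p q (|f x| / lam.toReal)) ∂μ ≤ 1 := by
  have hMtop : eLpNormEssSup f μ ≠ ⊤ := (hMlam.trans (lt_top_iff_ne_top.2 hlamtop)).ne
  set M := eLpNormEssSup f μ with hMdef
  set c := lam.toReal with hcdef
  set c₀ := lam₀.toReal with hc₀def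
  set Mr := M.toReal with hMrdef
  have hl0 : 0 < lam := lt_of_le_of_lt zero_le hMlam
  have hc : 0 < c := ENNReal.toReal_pos hl0.ne' hlamtop
  have hc₀ : 0 < c₀ := ENNReal.toReal_pos h00.ne' h0top
  have hMrc : Mr < c := (ENNReal.toReal_lt_toReal hMtop hlamtop).2 hMlam
  set θ := Mr / c with hθdef
  have hθ0 : 0 ≤ θ := div_nonneg ENNReal.toReal_nonneg hc.le
  have hθ1 : θ < 1 := (div_lt_one hc).2 hMrc
  set L := Real.log (e0 + θ) with hLdef
  have hL0 : 0 < L := Real.log_pos (by linarith [e0_gt_one])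
  have hL1 : L < 1 := log_e0t_lt_one hθ0 hθ1
  set C := (c₀ / c) ^ p / (Real.log e0) ^ q₀ with hCdef
  have hlogc : (0:ℝ) < (Real.log e0) ^ q₀ := Real.rpow_pos_of_pos log_e0_pos q₀
  have T : Tendsto (fun q : ℝ => C * L ^ q) atTop (𝓝 0) := by
    have := (tendsto_rpow_atTop_of_base_lt_one L (by linarith) hL1).const_mul C
    simpa using this
  have hev : ∀ᶠ q : ℝ in atTop, C * L ^ q < 1 := T.eventually (gt_mem_nhds one_pos)
  filter_upwards [hev, eventually_ge_atTop (0:ℝ)] with q hq1 hq0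
  have hCL0 : 0 ≤ C * L ^ q := by positivity
  have hae : ∀ᵐ x ∂μ, |f x| ≤ Mr := by
    filter_upwards [ae_le_eLpNormEssSup (f := f) (μ := μ)] with x hx
    have := ENNReal.toReal_mono hMtop hx
    simpa using this
  have hptwise : ∀ᵐ x ∂μ, ENNReal.ofReal (Bpq p q (|f x| / c)) ≤
      ENNReal.ofReal (C * L ^ q) * ENNReal.ofReal (Bpq p q₀ (|f x| / c₀)) := by
    filter_upwards [hae] with x hx
    rw [← ENNReal.ofReal_mul hCL0]
    apply ENNReal.ofReal_le_ofReal
    set t := |f x| with htdef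
    have ht0 : 0 ≤ t := abs_nonneg _
    set s := t / c with hsdef
    set u := t / c₀ with hudef
    have hs0 : 0 ≤ s := div_nonneg ht0 hc.le
    have hu0 : 0 ≤ u := div_nonneg ht0 hc₀.le
    have hsθ : s ≤ θ := by rw [hsdef, hθdef]; gcongr
    have h1 : Real.log (e0 + s) ≤ L :=
      Real.log_le_log (by linarith [e0_gt_one]) (by linarith)
    have h2 : (Real.log (e0 + s)) ^ q ≤ L ^ q :=
      Real.rpow_le_rpow (log_e0t_nonneg hs0) h1 hq0
    have h3 : s ^ p = u ^ p * (c₀ / c) ^ p := by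
      rw [← Real.mul_rpow hu0 (by positivity)]
      congr 1
      rw [hsdef, hudef]
      field_simp
    have h4 : u ^ p * (Real.log e0) ^ q₀ ≤ Bpq p q₀ u := by
      rw [Bpq]
      refine mul_le_mul_of_nonneg_left ?_ (Real.rpow_nonneg hu0 p)
      exact Real.rpow_le_rpow log_e0_pos.le
        (Real.log_le_log (by linarith [e0_gt_one]) (by linarith)) hq₀.le
    have h5 : u ^ p ≤ Bpq p q₀ u / (Real.log e0) ^ q₀ := (le_div_iff₀ hlogc).2 h4
    calc Bpq p q s = s ^ p * (Real.log (e0 + s)) ^ q := rfl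
      _ ≤ s ^ p * L ^ q := mul_le_mul_of_nonneg_left h2 (Real.rpow_nonneg hs0 p)
      _ = (u ^ p * (c₀ / c) ^ p) * L ^ q := by rw [h3]
      _ ≤ ((Bpq p q₀ u / (Real.log e0) ^ q₀) * (c₀ / c) ^ p) * L ^ q := by
          refine mul_le_mul_of_nonneg_right (mul_le_mul_of_nonneg_right h5 ?_) ?_
          · positivity
          · exact Real.rpow_nonneg hL0.le q
      _ = C * L ^ q * Bpq p q₀ u := by rw [hCdef]; ring
  calc ∫⁻ x, ENNReal.ofReal (Bpq p q (|f x| / c)) ∂μ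
      ≤ ∫⁻ x, ENNReal.ofReal (C * L ^ q) * ENNReal.ofReal (Bpq p q₀ (|f x| / c₀)) ∂μ :=
        lintegral_mono_ae hptwise
    _ = ENNReal.ofReal (C * L ^ q) * ∫⁻ x, ENNReal.ofReal (Bpq p q₀ (|f x| / c₀)) ∂μ :=
        lintegral_const_mul' _ _ ENNReal.ofReal_ne_top
    _ ≤ ENNReal.ofReal (C * L ^ q) * 1 := mul_le_mul_right hint0 _
    _ ≤ 1 := by rw [mul_one]; exact ENNReal.ofReal_le_one.2 hq1.le

theorem stmt0 {X : Type*} [MeasurableSpace X] (μ : Measure X) (f : X → ℝ)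
    (hf : Measurable f) (p q₀ : ℝ) (hp : 1 ≤ p) (hq₀ : 0 < q₀)
    (hfin : luxNorm μ (Bpq p q₀) f < ∞) :
    Tendsto (fun q : ℝ => luxNorm μ (Bpq p q) f) atTop (𝓝 (eLpNormEssSup f μ)) := by
  refine tendsto_order.2 ⟨fun a ha => ?_, fun b hb => ?_⟩
  · -- lower bound
    obtain ⟨β₁, h1, h2⟩ := exists_between ha
    have hatop : a ≠ ⊤ := ne_top_of_lt ha
    set β := min β₁ (a + 1) with hβdef
    have hβa : a < β := lt_min h1 (ENNReal.lt_add_right hatop one_ne_zero)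
    have hβM : β < eLpNormEssSup f μ := lt_of_le_of_lt (min_le_left _ _) h2
    have hβtop : β ≠ ⊤ :=
      ne_top_of_le_ne_top (ENNReal.add_ne_top.2 ⟨hatop, ENNReal.one_ne_top⟩) (min_le_right _ _)
    obtain ⟨γ₁, h3, h4⟩ := exists_between hβM
    set γ := min γ₁ (β + 1) with hγdef
    have hβγ : β < γ := lt_min h3 (ENNReal.lt_add_right hβtop one_ne_zero)
    have hγM : γ < eLpNormEssSup f μ := lt_of_le_of_lt (min_le_left _ _) h4
    have hγtop : γ ≠ ⊤ :=
      ne_top_of_le_ne_top (ENNReal.add_ne_top.2 ⟨hβtop, ENNReal.one_ne_top⟩) (min_le_right _ _)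
    have hβ0 : 0 < β := lt_of_le_of_lt zero_le hβa
    filter_upwards [lower_aux μ f hf p hp hβ0 hβγ hγtop hγM] with q hq
    have hle : β ≤ luxNorm μ (Bpq p q) f := by
      rw [luxNorm]
      exact le_sInf hq
    exact lt_of_lt_of_le hβa hle
  · -- upper bound
    rw [luxNorm] at hfin
    obtain ⟨lam₀, hmem, -⟩ := sInf_lt_iff.1 hfin
    obtain ⟨h00, h0top, hint0⟩ := hmem
    obtain ⟨lam₁, h1, h2⟩ := exists_between hb
    have hMtop : eLpNormEssSup f μ ≠ ⊤ := ne_top_of_lt hb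
    set lam := min lam₁ (eLpNormEssSup f μ + 1) with hlamdef
    have hMlam : eLpNormEssSup f μ < lam :=
      lt_min h1 (ENNReal.lt_add_right hMtop one_ne_zero)
    have hlamb : lam < b := lt_of_le_of_lt (min_le_left _ _) h2
    have hlamtop : lam ≠ ⊤ :=
      ne_top_of_le_ne_top (ENNReal.add_ne_top.2 ⟨hMtop, ENNReal.one_ne_top⟩) (min_le_right _ _)
    filter_upwards [upper_aux μ f p q₀ hp hq₀ h00 h0top hint0 hMlam hlamtop] with q hq
    have hl0 : 0 < lam := lt_of_le_of_lt zero_le hMlam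
    have hle : luxNorm μ (Bpq p q) f ≤ lam := by
      rw [luxNorm]
      exact sInf_le ⟨hl0, hlamtop, hq⟩
    exact lt_of_le_of_lt hle hlamb
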